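/- (Admissible range of the bit–phase correlation parameter for M > 2.) Let θ be a real number and let (a_i^j, a_x^j, a_y^j, a_z^j)_{j∈S} be a finite family of quadruples of complex numbers with N' := ∑_{j∈S} [2|a_i^j|² sin²θ + |a_x^j|² + (1+cos²θ)|a_y^j|² + |a_z^j|²] > 0. Define p_x := (1/N')·∑_j sin²θ·(|a_x^j|² + |a_z^j|²) and p_y := (1/N')·∑_j (2|a_y^j|² + cos²θ·(|a_x^j|² + |a_z^j|²)), and set e_b := p_x + p_y and λ := p_y. Then e_b·cos²θ ≤ λ ≤ e_b. -/

import Mathlib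

theorem admissible_range_correlation_parameter
    {ι : Type*} [Fintype ι] (θ : ℝ) (ai ax ay az : ι → ℂ)
    (N' : ℝ)
    (hN'def : N' = ∑ j : ι,
      (2 * ‖ai j‖ ^ 2 * Real.sin θ ^ 2 + ‖ax j‖ ^ 2 +
        (1 + Real.cos θ ^ 2) * ‖ay j‖ ^ 2 + ‖az j‖ ^ 2))
    (hN' : 0 < N')
    (px py eb lam : ℝ)
    (hpx : px = (1 / N') * ∑ j : ι,
      Real.sin θ ^ 2 * (‖ax j‖ ^ 2 + ‖az j‖ ^ 2))
    (hpy : py = (1 / N') * ∑ j : ι,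
      (2 * ‖ay j‖ ^ 2 +
        Real.cos θ ^ 2 * (‖ax j‖ ^ 2 + ‖az j‖ ^ 2)))
    (heb : eb = px + py) (hlam : lam = py) :
    eb * Real.cos θ ^ 2 ≤ lam ∧ lam ≤ eb := by
  set S1 : ℝ := ∑ j : ι,
      Real.sin θ ^ 2 * (‖ax j‖ ^ 2 + ‖az j‖ ^ 2) with hS1
  set S2 : ℝ := ∑ j : ι,
      (2 * ‖ay j‖ ^ 2 +
        Real.cos θ ^ 2 * (‖ax j‖ ^ 2 + ‖az j‖ ^ 2)) with hS2
  have hS1nonneg : 0 ≤ S1 := by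
    apply Finset.sum_nonneg
    intro j _
    positivity
  have hkey : S1 * Real.cos θ ^ 2 ≤ S2 * Real.sin θ ^ 2 := by
    rw [hS1, hS2, Finset.sum_mul, Finset.sum_mul]
    apply Finset.sum_le_sum
    intro j _
    have := Real.sin_sq_add_cos_sq θ
    nlinarith [norm_nonneg (ay j), norm_nonneg (ax j),
      norm_nonneg (az j), sq_nonneg (Real.sin θ), sq_nonneg (Real.cos θ)]
  have hpxn : 0 ≤ px := by
    rw [hpx]
    positivity
  have hc : Real.sin θ ^ 2 + Real.cos θ ^ 2 = 1 := Real.sin_sq_add_cos_sq θ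
  rw [heb, hlam]
  constructor
  · -- (px+py) cos² ≤ py ⇔ px cos² ≤ py sin²
    have h2 : px * Real.cos θ ^ 2 ≤ py * Real.sin θ ^ 2 := by
      rw [hpx, hpy]
      have hN'inv : 0 < 1 / N' := by positivity
      calc (1 / N') * S1 * Real.cos θ ^ 2 = (1 / N') * (S1 * Real.cos θ ^ 2) := by ring
        _ ≤ (1 / N') * (S2 * Real.sin θ ^ 2) := by
            exact mul_le_mul_of_nonneg_left hkey (le_of_lt hN'inv)
        _ = (1 / N') * S2 * Real.sin θ ^ 2 := by ring
    have h3 : py * Real.sin θ ^ 2 + py * Real.cos θ ^ 2 = py := by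
      rw [← mul_add, hc, mul_one]
    nlinarith [h2, h3]
  · linarith
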